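/- The parameter derivative of the Charlier polynomial satisfies ∂/∂μ c_n^{(μ)}(x) = (n/μ) c_{n−1}^{(μ)}(x) − (n/μ) c_n^{(μ)}(x) for n ≥ 1 and μ ≠ 0. -/

import Mathlib

open Finset

/-- Pochhammer symbol `(a)_k = a(a+1)⋯(a+k−1)`. -/
noncomputable def poch (a : ℝ) (k : ℕ) : ℝ := ∏ j ∈ Finset.range k, (a + j)

/-- Charlier polynomial `c_n^{(μ)}(x) = ∑_{k=0}^n (−n)_k (−x)_k (−1/μ)^k / k!`. -/
noncomputable def charlier (n : ℕ) (μ x : ℝ) : ℝ :=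
  ∑ k ∈ Finset.range (n + 1),
    poch (-(n : ℝ)) k * poch (-x) k * (-1 / μ) ^ k / (Nat.factorial k)

lemma poch_succ_left (a : ℝ) (k : ℕ) : poch a k * (a + k) = a * poch (a + 1) k := by
  induction k with
  | zero => simp [poch]
  | succ k ih =>
      have h1 : poch a (k + 1) = poch a k * (a + k) := by
        simp [poch, Finset.prod_range_succ]
      have h2 : poch (a + 1) (k + 1) = poch (a + 1) k * (a + 1 + k) := by
        simp [poch, Finset.prod_range_succ]
      rw [h1, h2]
      push_cast
      linear_combination (a + k + 1) * ih

lemma poch_eq_zero (a : ℝ) (k j : ℕ) (hj : j < k) (h : a + j = 0) : poch a k = 0 := by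
  exact Finset.prod_eq_zero (f := fun j : ℕ => a + (j : ℝ)) (Finset.mem_range.mpr hj) h

lemma hasDerivAt_aux (k : ℕ) (μ : ℝ) (hμ : μ ≠ 0) :
    HasDerivAt (fun m : ℝ => (-1 / m) ^ k) (-(k : ℝ) * (-1 / μ) ^ k / μ) μ := by
  have h0 : (fun m : ℝ => (-1 / m) ^ k) = fun m : ℝ => (-1 : ℝ) ^ k * m ^ (-(k : ℤ)) := by
    funext m
    rw [zpow_neg, zpow_natCast, ← inv_pow, ← mul_pow]
    congr 1
  have h := (hasDerivAt_zpow (-(k : ℤ)) μ (Or.inl hμ)).const_mul ((-1 : ℝ) ^ k)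
  rw [← h0] at h
  refine h.congr_deriv ?_
  have hμk : μ ^ (k : ℕ) ≠ 0 := pow_ne_zero _ hμ
  rw [zpow_sub₀ hμ, zpow_neg, zpow_natCast, zpow_one]
  field_simp
  rw [neg_pow (1 / μ), div_pow, one_pow]
  field_simp
  push_cast
  ring

theorem charlier_parameter_derivative (n : ℕ) (hn : 1 ≤ n) (μ : ℝ) (hμ : μ ≠ 0) (x : ℝ) :
    HasDerivAt (fun m : ℝ => charlier n m x)
      ((n / μ) * charlier (n - 1) μ x - (n / μ) * charlier n μ x) μ := by
  have key : ∀ k ∈ Finset.range (n + 1),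
      HasDerivAt (fun m : ℝ => poch (-(n : ℝ)) k * poch (-x) k * (-1 / m) ^ k / (Nat.factorial k))
        (poch (-(n : ℝ)) k * poch (-x) k * (-(k : ℝ) * (-1 / μ) ^ k / μ) / (Nat.factorial k)) μ := by
    intro k _
    have h := ((hasDerivAt_aux k μ hμ).const_mul (poch (-(n : ℝ)) k * poch (-x) k)).div_const
      (Nat.factorial k : ℝ)
    convert h using 2 <;> ring
  have hsum := HasDerivAt.fun_sum key
  have heq : ∑ k ∈ Finset.range (n + 1),
      poch (-(n : ℝ)) k * poch (-x) k * (-(k : ℝ) * (-1 / μ) ^ k / μ) / (Nat.factorial k)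
      = (n / μ) * charlier (n - 1) μ x - (n / μ) * charlier n μ x := by
    have hn1 : n - 1 + 1 = n := Nat.succ_pred_eq_of_pos hn
    have hc : ((n - 1 : ℕ) : ℝ) = (n : ℝ) - 1 := by
      have := Nat.cast_sub hn (R := ℝ); simpa using this
    have hzero : poch (-((n - 1 : ℕ) : ℝ)) n = 0 := by
      exact poch_eq_zero _ _ (n - 1) (by omega) (by ring)
    have hch : charlier (n - 1) μ x = ∑ k ∈ Finset.range (n + 1),
        poch (-((n - 1 : ℕ) : ℝ)) k * poch (-x) k * (-1 / μ) ^ k / (Nat.factorial k) := by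
      unfold charlier
      rw [hn1, Finset.sum_range_succ]
      simp [hzero]
    rw [hch]
    unfold charlier
    rw [Finset.mul_sum, Finset.mul_sum, ← Finset.sum_sub_distrib]
    apply Finset.sum_congr rfl
    intro k _
    have hp : poch (-(n : ℝ)) k * (-(n : ℝ) + k) = (-(n : ℝ)) * poch (-(n : ℝ) + 1) k :=
      poch_succ_left _ _
    rw [hc]
    have hfact : (Nat.factorial k : ℝ) ≠ 0 := Nat.cast_ne_zero.mpr (Nat.factorial_ne_zero k)
    have : -((n : ℝ) - 1) = -(n : ℝ) + 1 := by ring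
    rw [this]
    generalize (-1 / μ) ^ k = t
    field_simp
    linear_combination (-(poch (-x) k * t)) * hp
  rw [← heq]
  exact hsum
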